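/- arXiv:2007.07400 — 3 statements merged into one kernel-verified Lean document; each statement's English description precedes it below -/
import Mathlib

section
/- (Multi-head forgetting bound.) In the multi-head frozen feature model, let θ' = θ − η • Σ_{i∈S} ℓ'(⟨h_j, θ.mulVec(g(x_i))⟩, y_i) • (h_j ⬝ g(x_i)ᵀ) be one SGD step through head h_j with η ≥ 0. Then for any head h_k and any test point x, |⟨h_k, θ'.mulVec(g(x))⟩ − ⟨h_k, θ.mulVec(g(x))⟩| ≤ η · |⟨h_j, h_k⟩| · sqrt(Σ_{i∈S} Θ(x, x_i)²) · sqrt(Σ_{i∈S} ℓ'(⟨h_j, θ.mulVec(g(x_i))⟩, y_i)²). In particular, the change in original-task predictions is proportional both to the feature overlap with the new task data and to the similarity ⟨h_j, h_k⟩ between the model heads. -/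
open scoped RealInnerProductSpace

theorem aux_vmv {p a : ℕ} (u v : EuclideanSpace ℝ (Fin a)) (w z : EuclideanSpace ℝ (Fin p)) :
    (⟪u, (WithLp.toLp 2 ((Matrix.vecMulVec v w).mulVec z) : EuclideanSpace ℝ (Fin a))⟫ : ℝ)
      = ⟪v, u⟫ * ⟪w, z⟫ := by
  simp only [PiLp.inner_apply, RCLike.inner_apply, conj_trivial, Matrix.mulVec,
    dotProduct, Matrix.vecMulVec_apply, Finset.mul_sum, Finset.sum_mul]
  rw [Finset.sum_comm]
  exact Finset.sum_congr rfl fun i _ => Finset.sum_congr rfl fun jj _ => by ring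

theorem aux_sub {p a : ℕ} (u : EuclideanSpace ℝ (Fin a)) (A B : Matrix (Fin a) (Fin p) ℝ)
    (z : EuclideanSpace ℝ (Fin p)) :
    (⟪u, (WithLp.toLp 2 ((A - B).mulVec z) : EuclideanSpace ℝ (Fin a))⟫ : ℝ)
      = ⟪u, (WithLp.toLp 2 (A.mulVec z) : EuclideanSpace ℝ (Fin a))⟫
        - ⟪u, (WithLp.toLp 2 (B.mulVec z) : EuclideanSpace ℝ (Fin a))⟫ := by
  simp [PiLp.inner_apply, Matrix.sub_mulVec, ← Finset.sum_sub_distrib, mul_sub, sub_mul,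
    Pi.sub_apply]

theorem aux_smul {p a : ℕ} (u : EuclideanSpace ℝ (Fin a)) (r : ℝ)
    (A : Matrix (Fin a) (Fin p) ℝ) (z : EuclideanSpace ℝ (Fin p)) :
    (⟪u, (WithLp.toLp 2 ((r • A).mulVec z) : EuclideanSpace ℝ (Fin a))⟫ : ℝ)
      = r * ⟪u, (WithLp.toLp 2 (A.mulVec z) : EuclideanSpace ℝ (Fin a))⟫ := by
  simp only [PiLp.inner_apply, RCLike.inner_apply, conj_trivial, Matrix.smul_mulVec,
    Pi.smul_apply, smul_eq_mul, Finset.mul_sum]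
  exact Finset.sum_congr rfl fun i _ => by ring

theorem aux_sum {p a : ℕ} {ι : Type*} (u : EuclideanSpace ℝ (Fin a)) (S : Finset ι)
    (A : ι → Matrix (Fin a) (Fin p) ℝ) (z : EuclideanSpace ℝ (Fin p)) :
    (⟪u, (WithLp.toLp 2 ((∑ i ∈ S, A i).mulVec z) : EuclideanSpace ℝ (Fin a))⟫ : ℝ)
      = ∑ i ∈ S, ⟪u, (WithLp.toLp 2 ((A i).mulVec z) : EuclideanSpace ℝ (Fin a))⟫ := by
  simp only [PiLp.inner_apply, RCLike.inner_apply, conj_trivial, Matrix.mulVec,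
    dotProduct, Matrix.sum_apply, Finset.sum_mul, Finset.mul_sum]
  rw [Finset.sum_congr rfl fun x _ => Finset.sum_comm]
  rw [Finset.sum_comm]

/-- **Multi-head forgetting bound.** After one SGD step through head `h j` with `η ≥ 0`,
`θ' = θ − η • ∑ i ∈ S, ℓ'(⟪h j, θ.mulVec (g (x i))⟫, y i) • (h j ⬝ (g (x i))ᵀ)`,
the change in the head-`k` logit at any test point is bounded by
`η · |⟪h j, h k⟫| · ‖(Θ(xtest, x i))_{i∈S}‖ · ‖(ℓ'(…))_{i∈S}‖`: proportional both to the
feature overlap with the new task data and to the similarity between the model heads. -/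
theorem multihead_forgetting_bound
    {α ι : Type*} {p a : ℕ}
    (g : α → EuclideanSpace ℝ (Fin p))
    (S : Finset ι) (x : ι → α) (y : ι → ℝ)
    (ℓ ℓ' : ℝ → ℝ → ℝ)
    (η : ℝ) (hη : 0 ≤ η)
    (h : ℕ → EuclideanSpace ℝ (Fin a)) (j k : ℕ)
    (θ θ' : Matrix (Fin a) (Fin p) ℝ)
    (hθ' : θ' = θ - η • ∑ i ∈ S,
      ℓ' (⟪h j, (WithLp.toLp 2 (θ.mulVec (g (x i))) : EuclideanSpace ℝ (Fin a))⟫) (y i) •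
        Matrix.vecMulVec (h j) (g (x i)))
    (xtest : α) :
    |⟪h k, (WithLp.toLp 2 (θ'.mulVec (g xtest)) : EuclideanSpace ℝ (Fin a))⟫ -
        ⟪h k, (WithLp.toLp 2 (θ.mulVec (g xtest)) : EuclideanSpace ℝ (Fin a))⟫| ≤
      η * |⟪h j, h k⟫| *
        Real.sqrt (∑ i ∈ S, (⟪g xtest, g (x i)⟫) ^ 2) *
        Real.sqrt (∑ i ∈ S,
          (ℓ' (⟪h j, (WithLp.toLp 2 (θ.mulVec (g (x i))) : EuclideanSpace ℝ (Fin a))⟫) (y i)) ^ 2) := by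
  set c : ι → ℝ := fun i =>
    ℓ' (⟪h j, (WithLp.toLp 2 (θ.mulVec (g (x i))) : EuclideanSpace ℝ (Fin a))⟫) (y i) with hc
  set t : ι → ℝ := fun i => ⟪g xtest, g (x i)⟫ with ht
  have key : ⟪h k, (WithLp.toLp 2 (θ'.mulVec (g xtest)) : EuclideanSpace ℝ (Fin a))⟫ -
      ⟪h k, (WithLp.toLp 2 (θ.mulVec (g xtest)) : EuclideanSpace ℝ (Fin a))⟫
      = -(η * (⟪h j, h k⟫ * ∑ i ∈ S, t i * c i)) := by
    rw [hθ', aux_sub, aux_smul, aux_sum]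
    have : ∀ i ∈ S, (⟪h k, (WithLp.toLp 2 ((c i • Matrix.vecMulVec (h j) (g (x i))).mulVec (g xtest)) :
        EuclideanSpace ℝ (Fin a))⟫ : ℝ) = ⟪h j, h k⟫ * (c i * t i) := by
      intro i _
      rw [aux_smul, aux_vmv, ht]
      have : (⟪g (x i), g xtest⟫ : ℝ) = ⟪g xtest, g (x i)⟫ := real_inner_comm _ _
      rw [this]; ring
    rw [Finset.sum_congr rfl this, ← Finset.mul_sum]
    have : ∑ i ∈ S, c i * t i = ∑ i ∈ S, t i * c i :=
      Finset.sum_congr rfl fun i _ => mul_comm _ _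
    rw [this]; ring
  have hb : |∑ i ∈ S, t i * c i| ≤
      Real.sqrt (∑ i ∈ S, t i ^ 2) * Real.sqrt (∑ i ∈ S, c i ^ 2) := by
    calc |∑ i ∈ S, t i * c i| ≤ ∑ i ∈ S, |t i| * |c i| := by
          refine (Finset.abs_sum_le_sum_abs _ _).trans ?_
          exact le_of_eq (Finset.sum_congr rfl fun i _ => abs_mul _ _)
      _ ≤ Real.sqrt (∑ i ∈ S, |t i| ^ 2) * Real.sqrt (∑ i ∈ S, |c i| ^ 2) :=
          Real.sum_mul_le_sqrt_mul_sqrt _ _ _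
      _ = Real.sqrt (∑ i ∈ S, t i ^ 2) * Real.sqrt (∑ i ∈ S, c i ^ 2) := by
          simp [sq_abs]
  rw [key, abs_neg, abs_mul, abs_mul, abs_of_nonneg hη]
  calc η * (|⟪h j, h k⟫| * |∑ i ∈ S, t i * c i|)
      ≤ η * (|⟪h j, h k⟫| * (Real.sqrt (∑ i ∈ S, t i ^ 2) *
          Real.sqrt (∑ i ∈ S, c i ^ 2))) := by
        exact mul_le_mul_of_nonneg_left
          (mul_le_mul_of_nonneg_left hb (abs_nonneg _)) hη
    _ = η * |⟪h j, h k⟫| * Real.sqrt (∑ i ∈ S, t i ^ 2) *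
          Real.sqrt (∑ i ∈ S, c i ^ 2) := by ring
end

section
/- In the multi-head frozen feature model, consider the full SGD trajectory θ_0, θ_1, θ_2, … trained through head h_j: θ_{t+1} = θ_t − η • Σ_{i∈S} ℓ'(⟨h_j, θ_t.mulVec(g(x_i))⟩, y_i) • (h_j ⬝ g(x_i)ᵀ). If the heads are orthogonal, ⟨h_j, h_k⟩ = 0, then the head-k logits are unchanged throughout all of second-task training: ⟨h_k, θ_t.mulVec(g(x))⟩ = ⟨h_k, θ_0.mulVec(g(x))⟩ for every test point x and every t ∈ ℕ. -/
open scoped RealInnerProductSpace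

lemma aux_sum_mulVec {ι : Type*} {m n α : Type*} [Fintype n] [NonUnitalNonAssocSemiring α]
    (S : Finset ι) (M : ι → Matrix m n α) (v : n → α) :
    (∑ i ∈ S, M i).mulVec v = ∑ i ∈ S, (M i).mulVec v :=
  map_sum (Matrix.mulVec.addMonoidHomLeft v) M S

lemma aux_key {a : ℕ} (hk hj : EuclideanSpace ℝ (Fin a)) {p : ℕ} (w u : EuclideanSpace ℝ (Fin p))
    (horth : ⟪hj, hk⟫ = 0) :
    ⟪hk, (WithLp.toLp 2 ((Matrix.vecMulVec hj w).mulVec u) : EuclideanSpace ℝ (Fin a))⟫ = 0 := by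
  simp only [PiLp.inner_apply, RCLike.inner_apply, conj_trivial, Matrix.mulVec,
    Matrix.vecMulVec_apply, dotProduct, PiLp.toLp_apply] at *
  calc ∑ i, (∑ l, hj i * w l * u l) * hk i
      = (∑ i, hj i * hk i) * ∑ l, w l * u l := by
        rw [Finset.sum_mul_sum]
        exact Finset.sum_congr rfl fun i _ => by
          rw [Finset.sum_mul]
          exact Finset.sum_congr rfl fun l _ => by ring
    _ = 0 := by rw [show (∑ i, hj i * hk i) = 0 by simpa only [mul_comm] using horth, zero_mul]

/-- **Multi-head frozen feature model: orthogonal heads never forget.** Along the full SGD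
trajectory trained through head `h j`,
`θ (t+1) = θ t − η • ∑ i ∈ S, ℓ'(⟪h j, (θ t).mulVec (g (x i))⟫, y i) • (h j ⬝ (g (x i))ᵀ)`,
if the heads are orthogonal, `⟪h j, h k⟫ = 0`, then the head-`k` logits are unchanged
throughout all of second-task training. -/
theorem multihead_orthogonal_heads_no_forgetting
    {α ι : Type*} {p a : ℕ}
    (g : α → EuclideanSpace ℝ (Fin p))
    (S : Finset ι) (x : ι → α) (y : ι → ℝ)
    (ℓ ℓ' : ℝ → ℝ → ℝ)
    (η : ℝ)
    (h : ℕ → EuclideanSpace ℝ (Fin a)) (j k : ℕ)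
    (θ : ℕ → Matrix (Fin a) (Fin p) ℝ)
    (hstep : ∀ t : ℕ, θ (t + 1) = θ t - η • ∑ i ∈ S,
      ℓ' (⟪h j, (WithLp.toLp 2 ((θ t).mulVec (g (x i))) : EuclideanSpace ℝ (Fin a))⟫) (y i) •
        Matrix.vecMulVec (h j) (g (x i)))
    (horth : ⟪h j, h k⟫ = 0) :
    ∀ (xtest : α) (t : ℕ),
      ⟪h k, (WithLp.toLp 2 ((θ t).mulVec (g xtest)) : EuclideanSpace ℝ (Fin a))⟫ =
        ⟪h k, (WithLp.toLp 2 ((θ 0).mulVec (g xtest)) : EuclideanSpace ℝ (Fin a))⟫ := by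
  intro xtest t
  induction t with
  | zero => rfl
  | succ t ih =>
    rw [hstep t, ← ih, Matrix.sub_mulVec, Matrix.smul_mulVec, aux_sum_mulVec]
    simp only [Matrix.smul_mulVec]
    rw [WithLp.toLp_sub, WithLp.toLp_smul, WithLp.toLp_sum, inner_sub_right, real_inner_smul_right, inner_sum]
    have hz : ∀ i ∈ S,
        ⟪h k, (WithLp.toLp 2 ((ℓ' (⟪h j, (WithLp.toLp 2 ((θ t).mulVec (g (x i))) : EuclideanSpace ℝ (Fin a))⟫) (y i)) •
          ((Matrix.vecMulVec (h j) (g (x i))).mulVec (g xtest))) : EuclideanSpace ℝ (Fin a))⟫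
          = 0 := by
      intro i _
      rw [WithLp.toLp_smul, real_inner_smul_right, aux_key (h k) (h j) (g (x i)) (g xtest) horth, mul_zero]
    rw [Finset.sum_congr rfl hz]
    simp
end

section
/- The linear CKA similarity is invariant under orthogonal transformation of either representation: for matrices X ∈ Matrix (Fin m) (Fin n₁) ℝ and Y ∈ Matrix (Fin m) (Fin n₂) ℝ with XᵀX ≠ 0 and YᵀY ≠ 0, and for orthogonal matrices Q ∈ Matrix (Fin n₁) (Fin n₁) ℝ (QᵀQ = 1) and R ∈ Matrix (Fin n₂) (Fin n₂) ℝ (RᵀR = 1), one has CKA(X ⬝ Q, Y ⬝ R) = CKA(X, Y). -/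
/-- The Frobenius norm of a real matrix. -/
noncomputable def frobNorm {m n : Type*} [Fintype m] [Fintype n]
    (A : Matrix m n ℝ) : ℝ :=
  Real.sqrt (∑ i, ∑ j, (A i j) ^ 2)

lemma frobNorm_eq_trace {m n : Type*} [Fintype m] [Fintype n]
    (A : Matrix m n ℝ) : frobNorm A = Real.sqrt (Matrix.trace (A.transpose * A)) := by
  unfold frobNorm
  congr 1
  simp [Matrix.trace, Matrix.mul_apply, Matrix.diag, sq]
  rw [Finset.sum_comm]

lemma frobNorm_orth {k l p q : Type*} [Fintype k] [Fintype l] [Fintype p] [Fintype q]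
    [DecidableEq k] [DecidableEq l]
    (M : Matrix k l ℝ) (Q : Matrix k p ℝ) (R : Matrix l q ℝ)
    (hQ : Q * Q.transpose = 1) (hR : R * R.transpose = 1) :
    frobNorm (Q.transpose * M * R) = frobNorm M := by
  rw [frobNorm_eq_trace, frobNorm_eq_trace]
  congr 1
  have h : (Q.transpose * M * R).transpose * (Q.transpose * M * R)
      = R.transpose * (M.transpose * M * R) := by
    simp only [Matrix.transpose_mul, Matrix.transpose_transpose, Matrix.mul_assoc]
    rw [← Matrix.mul_assoc Q Q.transpose, hQ, Matrix.one_mul]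
  rw [h, Matrix.trace_mul_comm, Matrix.mul_assoc, hR, Matrix.mul_one]

/-- The linear-kernel centered kernel alignment (CKA) similarity between two
representations `X` and `Y` of the same dataset of `m` examples:
`CKA(X, Y) = ‖XᵀY‖_F² / (‖XᵀX‖_F · ‖YᵀY‖_F)`. -/
noncomputable def CKA {m n₁ n₂ : ℕ}
    (X : Matrix (Fin m) (Fin n₁) ℝ) (Y : Matrix (Fin m) (Fin n₂) ℝ) : ℝ :=
  frobNorm (X.transpose * Y) ^ 2 / (frobNorm (X.transpose * X) * frobNorm (Y.transpose * Y))

/-- **Linear CKA is invariant under orthogonal transformation of either representation.**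
For `XᵀX ≠ 0`, `YᵀY ≠ 0` and orthogonal matrices `Q` (`QᵀQ = 1`) and `R` (`RᵀR = 1`),
`CKA(XQ, YR) = CKA(X, Y)`. -/
theorem CKA_orthogonal_invariant {m n₁ n₂ : ℕ}
    (X : Matrix (Fin m) (Fin n₁) ℝ) (Y : Matrix (Fin m) (Fin n₂) ℝ)
    (hX : X.transpose * X ≠ 0) (hY : Y.transpose * Y ≠ 0)
    (Q : Matrix (Fin n₁) (Fin n₁) ℝ) (hQ : Q.transpose * Q = 1)
    (R : Matrix (Fin n₂) (Fin n₂) ℝ) (hR : R.transpose * R = 1) :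
    CKA (X * Q) (Y * R) = CKA X Y := by
  have hQ' : Q * Q.transpose = 1 := mul_eq_one_comm.mp hQ
  have hR' : R * R.transpose = 1 := mul_eq_one_comm.mp hR
  unfold CKA
  have e1 : (X * Q).transpose * (Y * R) = Q.transpose * (X.transpose * Y) * R := by
    simp [Matrix.transpose_mul, Matrix.mul_assoc]
  have e2 : (X * Q).transpose * (X * Q) = Q.transpose * (X.transpose * X) * Q := by
    simp [Matrix.transpose_mul, Matrix.mul_assoc]
  have e3 : (Y * R).transpose * (Y * R) = R.transpose * (Y.transpose * Y) * R := by
    simp [Matrix.transpose_mul, Matrix.mul_assoc]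
  rw [e1, e2, e3, frobNorm_orth _ _ _ hQ' hR', frobNorm_orth _ _ _ hQ' hQ',
    frobNorm_orth _ _ _ hR' hR']
end
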